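/- arXiv:2001.09176 — 8 statements merged into one kernel-verified Lean document; each statement's English description precedes it below -/
import Mathlib

section
/- Let G be a finite simple graph and {B_1, …, B_j} a strongly disjoint set of bouquets of G of type (i, j). Then the set of all stems of B_1, …, B_j is a self disjoint set of type (i, i+j) in G (regarded as a 2-uniform simple hypergraph), i.e. it consists of i edges whose union has i + j vertices. -/
variable {V : Type*} [DecidableEq V] [Fintype V]

/-- The union of a family of edges. -/
def unionEdges (M : Finset (Finset V)) : Finset V := M.biUnion id

/-- `E` is the edge set of a simple hypergraph: every edge has at least two
vertices and no edge is contained in another distinct edge. -/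
def IsSimpleHypergraph (E : Finset (Finset V)) : Prop :=
  (∀ S ∈ E, 2 ≤ S.card) ∧ ∀ S ∈ E, ∀ T ∈ E, S ⊆ T → S = T

/-- A family `M` of edges of `E` is a semi-induced matching if no edge of `E`
outside `M` is contained in the union of the members of `M`. -/
def IsSemiInducedMatching (E M : Finset (Finset V)) : Prop :=
  M ⊆ E ∧ ∀ S ∈ E, S ∉ M → ¬ S ⊆ unionEdges M

/-- An induced matching is a semi-induced matching whose edges are pairwise disjoint. -/
def IsInducedMatching (E M : Finset (Finset V)) : Prop :=
  IsSemiInducedMatching E M ∧ ∀ S ∈ M, ∀ T ∈ M, S ≠ T → Disjoint S T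

/-- A self semi-induced matching is a semi-induced matching in which no member
is contained in the union of the other members. -/
def IsSelfSemiInducedMatching (E M : Finset (Finset V)) : Prop :=
  IsSemiInducedMatching E M ∧ ∀ S ∈ M, ¬ S ⊆ unionEdges (M.erase S)

/-- A self-contained semi-induced matching. -/
def IsSelfContainedSemiInducedMatching (E M : Finset (Finset V)) : Prop :=
  M ⊆ E ∧
  (∀ S ∈ E, S ∉ M → ¬ S ⊆ unionEdges M ∨ ∃ T ∈ M, T ⊆ S ∪ unionEdges (M.erase T)) ∧
  ∀ S ∈ M, ¬ S ⊆ unionEdges (M.erase S)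

/-- A self disjoint set of edges. -/
def IsSelfDisjointSet (E M : Finset (Finset V)) : Prop :=
  M ⊆ E ∧ (∀ S ∈ M, ¬ S ⊆ unionEdges (M.erase S)) ∧
  ∃ M₀ ⊆ M, IsInducedMatching E M₀ ∧
    ∀ S ∈ M, S ∉ M₀ → ∃ T ∈ M₀, (S \ T).card = 1

/-- A self semi-disjoint set of edges. -/
def IsSelfSemiDisjointSet (E M : Finset (Finset V)) : Prop :=
  M ⊆ E ∧ (∀ S ∈ M, ¬ S ⊆ unionEdges (M.erase S)) ∧
  ∃ M₀ ⊆ M, IsSemiInducedMatching E M₀ ∧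
    ∀ S ∈ M, S ∉ M₀ → ∃ T ∈ M₀, (S \ T).card = 1

/-- A bouquet of the (2-uniform) graph with edge set `E`, given by its root `b.1`
and its nonempty set of flowers `b.2`; its stems must be edges of `E`. -/
def IsBouquet (E : Finset (Finset V)) (b : V × Finset V) : Prop :=
  b.2.Nonempty ∧ b.1 ∉ b.2 ∧ ∀ y ∈ b.2, ({b.1, y} : Finset V) ∈ E

/-- The vertex set of a bouquet. -/
def bouquetVerts (b : V × Finset V) : Finset V := insert b.1 b.2

/-- The set of stems of a bouquet. -/
def stems (b : V × Finset V) : Finset (Finset V) :=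
  b.2.image fun y => ({b.1, y} : Finset V)

/-- A strongly disjoint set of bouquets: the vertex sets of the bouquets are
pairwise disjoint and one can choose one stem from each bouquet such that the
chosen stems form an induced matching. -/
def IsStronglyDisjointBouquets (E : Finset (Finset V)) (B : Finset (V × Finset V)) : Prop :=
  (∀ b ∈ B, IsBouquet E b) ∧
  (∀ b ∈ B, ∀ b' ∈ B, b ≠ b' → Disjoint (bouquetVerts b) (bouquetVerts b')) ∧
  ∃ f : V × Finset V → V, (∀ b ∈ B, f b ∈ b.2) ∧
    IsInducedMatching E (B.image fun b => ({b.1, f b} : Finset V))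

lemma mem_stems_iff {b : V × Finset V} {S : Finset V} :
    S ∈ stems b ↔ ∃ y ∈ b.2, S = ({b.1, y} : Finset V) := by
  simp [stems, eq_comm]

lemma stem_subset_verts {b : V × Finset V} {S : Finset V} (hS : S ∈ stems b) :
    S ⊆ bouquetVerts b := by
  obtain ⟨y, hy, rfl⟩ := mem_stems_iff.mp hS
  intro v hv
  simp only [Finset.mem_insert, Finset.mem_singleton] at hv
  rcases hv with rfl | rfl
  · exact Finset.mem_insert_self _ _
  · exact Finset.mem_insert_of_mem hy

/-- if `B` is a strongly disjoint set of bouquets of a graph `G`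
of type `(i, j)` (`i` flowers in total, `j` bouquets), then the set of all
stems of the bouquets of `B` is a self disjoint set of type `(i, i + j)`. -/
theorem stronglyDisjointBouquets_stems_selfDisjoint
    (E : Finset (Finset V)) (hH : IsSimpleHypergraph E)
    (h2 : ∀ S ∈ E, S.card = 2)
    (B : Finset (V × Finset V)) (hB : IsStronglyDisjointBouquets E B)
    (i j : ℕ) (hi : ∑ b ∈ B, b.2.card = i) (hj : B.card = j) :
    IsSelfDisjointSet E (B.biUnion stems) ∧
    (B.biUnion stems).card = i ∧
    (unionEdges (B.biUnion stems)).card = i + j := by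
  obtain ⟨hbq, hdisj, f, hf, hM₀⟩ := hB
  set M : Finset (Finset V) := B.biUnion stems with hMdef
  -- stems of distinct bouquets are disjoint
  have hstemdisj : ∀ b ∈ B, ∀ b' ∈ B, b ≠ b' → Disjoint (stems b) (stems b') := by
    intro b hb b' hb' hne
    rw [Finset.disjoint_left]
    intro S hS hS'
    have h1 : b.1 ∈ bouquetVerts b' := stem_subset_verts hS' (by
      obtain ⟨y, hy, rfl⟩ := mem_stems_iff.mp hS
      exact Finset.mem_insert_self _ _)
    exact Finset.disjoint_left.mp (hdisj b hb b' hb' hne)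
      (Finset.mem_insert_self _ _) h1
  -- membership in M
  have hmemM : ∀ S, S ∈ M ↔ ∃ b ∈ B, ∃ y ∈ b.2, S = ({b.1, y} : Finset V) := by
    intro S
    simp only [hMdef, Finset.mem_biUnion]
    constructor
    · rintro ⟨b, hb, hS⟩
      obtain ⟨y, hy, rfl⟩ := mem_stems_iff.mp hS
      exact ⟨b, hb, y, hy, rfl⟩
    · rintro ⟨b, hb, y, hy, rfl⟩
      exact ⟨b, hb, mem_stems_iff.mpr ⟨y, hy, rfl⟩⟩
  have hME : M ⊆ E := by
    intro S hS
    obtain ⟨b, hb, y, hy, rfl⟩ := (hmemM S).mp hS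
    exact (hbq b hb).2.2 y hy
  -- no stem is contained in the union of the others
  have hself : ∀ S ∈ M, ¬ S ⊆ unionEdges (M.erase S) := by
    intro S hS hsub
    obtain ⟨b, hb, y, hy, rfl⟩ := (hmemM S).mp hS
    have hyU : y ∈ unionEdges (M.erase ({b.1, y} : Finset V)) :=
      hsub (by simp)
    simp only [unionEdges, Finset.mem_biUnion, id_eq] at hyU
    obtain ⟨T, hT, hyT⟩ := hyU
    have hTne := (Finset.mem_erase.mp hT).1
    have hTM := (Finset.mem_erase.mp hT).2
    obtain ⟨b', hb', y', hy', rfl⟩ := (hmemM T).mp hTM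
    by_cases hbb : b = b'
    · subst hbb
      simp only [Finset.mem_insert, Finset.mem_singleton] at hyT
      rcases hyT with rfl | rfl
      · exact (hbq b hb).2.1 hy
      · exact hTne rfl
    · have h1 : y ∈ bouquetVerts b := Finset.mem_insert_of_mem hy
      have h2' : y ∈ bouquetVerts b' := stem_subset_verts
        (mem_stems_iff.mpr ⟨y', hy', rfl⟩) hyT
      exact Finset.disjoint_left.mp (hdisj b hb b' hb' hbb) h1 h2'
  -- the chosen induced matching
  set M₀ : Finset (Finset V) := B.image fun b => ({b.1, f b} : Finset V) with hM₀def
  have hM₀M : M₀ ⊆ M := by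
    intro S hS
    obtain ⟨b, hb, rfl⟩ := Finset.mem_image.mp hS
    exact (hmemM _).mpr ⟨b, hb, f b, hf b hb, rfl⟩
  have hsd : IsSelfDisjointSet E M := by
    refine ⟨hME, hself, M₀, hM₀M, hM₀, ?_⟩
    intro S hS hSM₀
    obtain ⟨b, hb, y, hy, rfl⟩ := (hmemM S).mp hS
    refine ⟨({b.1, f b} : Finset V), Finset.mem_image.mpr ⟨b, hb, rfl⟩, ?_⟩
    have hyb : y ≠ b.1 := fun h => (hbq b hb).2.1 (h ▸ hy)
    have hyf : y ≠ f b := by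
      rintro rfl
      exact hSM₀ (Finset.mem_image.mpr ⟨b, hb, rfl⟩)
    have : ({b.1, y} : Finset V) \ ({b.1, f b} : Finset V) = {y} := by
      ext v
      simp only [Finset.mem_sdiff, Finset.mem_insert, Finset.mem_singleton]
      constructor
      · rintro ⟨rfl | rfl, hv⟩
        · exact absurd (Or.inl rfl) hv
        · rfl
      · rintro rfl
        exact ⟨Or.inr rfl, fun h => h.elim hyb hyf⟩
    rw [this, Finset.card_singleton]
  refine ⟨hsd, ?_, ?_⟩
  · rw [hMdef, Finset.card_biUnion hstemdisj, ← hi]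
    refine Finset.sum_congr rfl fun b hb => ?_
    rw [stems, Finset.card_image_of_injOn]
    intro y hy y' hy' h
    have h' : ({b.1, y} : Finset V) = ({b.1, y'} : Finset V) := h
    have : y ∈ ({b.1, y'} : Finset V) := h' ▸ (by simp : y ∈ ({b.1, y} : Finset V))
    simp only [Finset.mem_insert, Finset.mem_singleton] at this
    rcases this with rfl | rfl
    · exact absurd hy (hbq b hb).2.1
    · rfl
  · have hU : unionEdges M = B.biUnion bouquetVerts := by
      ext v
      simp only [unionEdges, Finset.mem_biUnion, id_eq]
      constructor
      · rintro ⟨S, hS, hv⟩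
        obtain ⟨b, hb, hSb⟩ := Finset.mem_biUnion.mp hS
        exact ⟨b, hb, stem_subset_verts hSb hv⟩
      · rintro ⟨b, hb, hv⟩
        simp only [bouquetVerts, Finset.mem_insert] at hv
        rcases hv with rfl | hv
        · obtain ⟨y, hy⟩ := (hbq b hb).1
          exact ⟨({b.1, y} : Finset V), Finset.mem_biUnion.mpr
            ⟨b, hb, mem_stems_iff.mpr ⟨y, hy, rfl⟩⟩, by simp⟩
        · exact ⟨({b.1, v} : Finset V), Finset.mem_biUnion.mpr
            ⟨b, hb, mem_stems_iff.mpr ⟨v, hv, rfl⟩⟩, by simp⟩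
    rw [hU, Finset.card_biUnion hdisj, ← hi, ← hj, Finset.card_eq_sum_ones B, ← Finset.sum_add_distrib]
    refine Finset.sum_congr rfl fun b hb => ?_
    rw [bouquetVerts, Finset.card_insert_of_notMem (hbq b hb).2.1]
end

section
/- Let G be a finite simple graph and S a self disjoint set in G (regarded as a 2-uniform simple hypergraph) of type (i, i+j), i.e. S consists of i edges whose union has i + j vertices. Then there exists a strongly disjoint set of bouquets {B_1, …, B_j} of G of type (i, j) whose set of stems is exactly S. -/
variable {V : Type*} [DecidableEq V] [Fintype V]

private lemma pair_eq_of_card_two {S : Finset V} {x a : V} (hcard : S.card = 2)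
    (hx : x ∈ S) (ha : a ∈ S) (hxa : x ≠ a) : S = {x, a} := by
  have hsub : ({x, a} : Finset V) ⊆ S := by
    intro v hv
    rcases Finset.mem_insert.mp hv with rfl | hv
    · exact hx
    · exact (Finset.mem_singleton.mp hv) ▸ ha
  have hc : ({x, a} : Finset V).card = 2 := by
    rw [Finset.card_insert_of_notMem (by simp [hxa]), Finset.card_singleton]
  exact (Finset.eq_of_subset_of_card_le hsub (by omega)).symm

/-- if `M` is a self disjoint set in a graph `G` of type
`(i, i + j)`, then `M` is the set of stems of a strongly disjoint set of
bouquets of `G` of type `(i, j)`. -/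
theorem selfDisjoint_eq_stems_of_stronglyDisjointBouquets
    (E : Finset (Finset V)) (hH : IsSimpleHypergraph E)
    (h2 : ∀ S ∈ E, S.card = 2)
    (M : Finset (Finset V)) (i j : ℕ)
    (hM : IsSelfDisjointSet E M) (hi : M.card = i)
    (hj : (unionEdges M).card = i + j) :
    ∃ B : Finset (V × Finset V), IsStronglyDisjointBouquets E B ∧
      (∑ b ∈ B, b.2.card) = i ∧ B.card = j ∧ B.biUnion stems = M := by
  classical
  obtain ⟨hME, hpriv, M₀, hM₀M, hIM₀, hatt⟩ := hM
  have hunion_empty : unionEdges (∅ : Finset (Finset V)) = ∅ := by simp [unionEdges]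
  by_cases hMe : M = ∅
  · subst hMe
    have hi0 : i = 0 := by simpa using hi.symm
    have hj0 : j = 0 := by
      have h := hj
      rw [hunion_empty] at h
      simp at h
      omega
    refine ⟨∅, ⟨by simp, by simp, fun b => b.1, by simp, ?_⟩, by simp [hi0], by simp [hj0], by simp⟩
    rw [Finset.image_empty]
    refine ⟨⟨Finset.empty_subset _, ?_⟩, by simp⟩
    intro S hS _ hsub
    rw [hunion_empty, Finset.subset_empty] at hsub
    have := h2 S hS
    simp [hsub] at this
  · have hVne : Nonempty V := by
      obtain ⟨S, hS⟩ := Finset.nonempty_iff_ne_empty.mpr hMe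
      have hc : S.card = 2 := h2 S (hME hS)
      have hne : S.Nonempty := Finset.card_pos.mp (by omega)
      exact ⟨hne.choose⟩
    have hdisj₀ := hIM₀.2
    have hcard2 : ∀ S ∈ M, S.card = 2 := fun S hS => h2 S (hME hS)
    have hmemU : ∀ (N : Finset (Finset V)) (v : V), v ∈ unionEdges N ↔ ∃ S ∈ N, v ∈ S := by
      intro N v; simp [unionEdges]
    have hpriv' : ∀ S ∈ M, ∃ a ∈ S, ∀ S' ∈ M, S' ≠ S → a ∉ S' := by
      intro S hS
      obtain ⟨a, haS, ha⟩ := Finset.not_subset.mp (hpriv S hS)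
      refine ⟨a, haS, fun S' hS' hne hmem => ha ?_⟩
      exact (hmemU _ a).mpr ⟨S', Finset.mem_erase.mpr ⟨hne, hS'⟩, hmem⟩
    -- the root of each edge of M₀
    have hrootex : ∀ T : Finset V, ∃ x : V, T ∈ M₀ → x ∈ T ∧
        ∀ S ∈ M, S ≠ T → ∀ v ∈ S, v ∈ T → v = x := by
      intro T
      by_cases hT : T ∈ M₀
      · by_cases hA : ∃ S, S ∈ M ∧ S ≠ T ∧ ∃ z, z ∈ S ∧ z ∈ T
        · obtain ⟨S₁, hS₁M, hS₁ne, z, hzS, hzT⟩ := hA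
          refine ⟨z, fun _ => ⟨hzT, ?_⟩⟩
          intro S hS hSne v hvS hvT
          by_contra hvz
          have hTM : T ∈ M := hM₀M hT
          have hTeq : T = {v, z} := pair_eq_of_card_two (hcard2 T hTM) hvT hzT hvz
          apply hpriv T hTM
          intro w hw
          rw [hTeq] at hw
          rcases Finset.mem_insert.mp hw with rfl | hw
          · exact (hmemU _ w).mpr ⟨S, Finset.mem_erase.mpr ⟨hSne, hS⟩, hvS⟩
          · refine (hmemU _ w).mpr ⟨S₁, Finset.mem_erase.mpr ⟨hS₁ne, hS₁M⟩, ?_⟩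
            rw [Finset.mem_singleton.mp hw]
            exact hzS
        · have hTM := hM₀M hT
          have hne : T.Nonempty := Finset.card_pos.mp (by rw [hcard2 T hTM]; omega)
          obtain ⟨x, hx⟩ := hne
          refine ⟨x, fun _ => ⟨hx, ?_⟩⟩
          intro S hS hSne v hvS hvT
          exact absurd ⟨S, hS, hSne, v, hvS, hvT⟩ hA
      · exact ⟨hVne.some, fun h => absurd h hT⟩
    choose root hroot using hrootex
    -- the other endpoint of each edge of M₀
    have hotherex : ∀ T : Finset V, ∃ y : V, T ∈ M₀ → y ∈ T ∧ y ≠ root T := by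
      intro T
      by_cases hT : T ∈ M₀
      · have hTM := hM₀M hT
        have hne : (T.erase (root T)).Nonempty := by
          rw [← Finset.card_pos, Finset.card_erase_of_mem (hroot T hT).1, hcard2 T hTM]
          omega
        obtain ⟨y, hy⟩ := hne
        exact ⟨y, fun _ => ⟨Finset.mem_of_mem_erase hy, Finset.ne_of_mem_erase hy⟩⟩
      · exact ⟨hVne.some, fun h => absurd h hT⟩
    choose other hother using hotherex
    have hTpair : ∀ T ∈ M₀, T = {root T, other T} := fun T hT =>
      pair_eq_of_card_two (hcard2 T (hM₀M hT)) (hroot T hT).1 (hother T hT).1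
        (Ne.symm (hother T hT).2)
    have hrootother : ∀ T ∈ M₀, root T ≠ other T := fun T hT => Ne.symm (hother T hT).2
    -- attached edges and flowers
    set A : Finset V → Finset (Finset V) :=
      fun T => M.filter (fun S => S ≠ T ∧ root T ∈ S) with hAdef
    set F : Finset V → Finset V :=
      fun T => insert (other T) ((A T).biUnion (fun S => S.erase (root T))) with hFdef
    have hAmem : ∀ T S, S ∈ A T ↔ S ∈ M ∧ S ≠ T ∧ root T ∈ S := by
      intro T S; simp [hAdef, Finset.mem_filter]
    have hFmem : ∀ T v, v ∈ F T ↔ v = other T ∨ ∃ S ∈ A T, v ∈ S.erase (root T) := by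
      intro T v; simp [hFdef]
    have hAstruct : ∀ T ∈ M₀, ∀ S ∈ A T, ∀ a ∈ S.erase (root T),
        S = {root T, a} ∧ ∀ S' ∈ M, S' ≠ S → a ∉ S' := by
      intro T hT S hSA a ha
      obtain ⟨hSM, hSne, hrS⟩ := (hAmem T S).mp hSA
      have haS := Finset.mem_of_mem_erase ha
      have hane : a ≠ root T := Finset.ne_of_mem_erase ha
      have hSeq : S = {root T, a} := pair_eq_of_card_two (hcard2 S hSM) hrS haS (Ne.symm hane)
      refine ⟨hSeq, ?_⟩
      obtain ⟨p, hpS, hp⟩ := hpriv' S hSM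
      have hpa : p = a := by
        rw [hSeq] at hpS
        rcases Finset.mem_insert.mp hpS with rfl | hpS
        · exact absurd (hroot T hT).1 (hp T (hM₀M hT) (Ne.symm hSne))
        · exact Finset.mem_singleton.mp hpS
      intro S' hS' hne
      exact hpa ▸ hp S' hS' hne
    have hAnotM₀ : ∀ T ∈ M₀, ∀ S ∈ A T, S ∉ M₀ := by
      intro T hT S hSA hSM₀
      obtain ⟨hSM, hSne, hrS⟩ := (hAmem T S).mp hSA
      exact Finset.disjoint_left.mp (hdisj₀ S hSM₀ T hT hSne) hrS (hroot T hT).1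
    have hmem_attach : ∀ S ∈ M, S ∉ M₀ → ∃ T ∈ M₀, S ∈ A T := by
      intro S hS hSM₀
      obtain ⟨T, hT, hTc⟩ := hatt S hS hSM₀
      have hSne : S ≠ T := fun h => hSM₀ (h ▸ hT)
      have hcap : (S ∩ T).Nonempty := by
        rw [← Finset.card_pos]
        have h := Finset.card_sdiff_add_card_inter S T
        rw [hTc, hcard2 S hS] at h
        omega
      obtain ⟨v, hv⟩ := hcap
      have hvS := (Finset.mem_inter.mp hv).1
      have hvT := (Finset.mem_inter.mp hv).2
      have hvr : v = root T := (hroot T hT).2 S hS hSne v hvS hvT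
      exact ⟨T, hT, (hAmem T S).mpr ⟨hS, hSne, hvr ▸ hvS⟩⟩
    have hAuniq : ∀ T ∈ M₀, ∀ T' ∈ M₀, T ≠ T' → ∀ S ∈ A T, S ∉ A T' := by
      intro T hT T' hT' hne S hSA hSA'
      obtain ⟨hSM, hSne, hrS⟩ := (hAmem T S).mp hSA
      obtain ⟨_, hSne', hrS'⟩ := (hAmem T' S).mp hSA'
      have hrr : root T ≠ root T' := by
        intro h
        have h1 := (hroot T' hT').1
        rw [← h] at h1
        exact Finset.disjoint_left.mp (hdisj₀ T hT T' hT' hne) (hroot T hT).1 h1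
      have hSeq : S = {root T, root T'} := pair_eq_of_card_two (hcard2 S hSM) hrS hrS' hrr
      obtain ⟨p, hpS, hp⟩ := hpriv' S hSM
      rw [hSeq] at hpS
      rcases Finset.mem_insert.mp hpS with rfl | hpS
      · exact hp T (hM₀M hT) (Ne.symm hSne) (hroot T hT).1
      · have hpr := Finset.mem_singleton.mp hpS
        subst hpr
        exact hp T' (hM₀M hT') (Ne.symm hSne') (hroot T' hT').1
    have hFroot : ∀ T ∈ M₀, root T ∉ F T := by
      intro T hT h
      rcases (hFmem T _).mp h with h | ⟨S, hSA, h⟩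
      · exact hrootother T hT h
      · exact Finset.ne_of_mem_erase h rfl
    have hvert : ∀ T ∈ M₀, ∀ v ∈ insert (root T) (F T),
        v ∈ T ∨ ∃ S ∈ A T, S = {root T, v} ∧ ∀ S' ∈ M, S' ≠ S → v ∉ S' := by
      intro T hT v hv
      rcases Finset.mem_insert.mp hv with rfl | hv
      · exact Or.inl (hroot T hT).1
      · rcases (hFmem T v).mp hv with rfl | ⟨S, hSA, hvS⟩
        · exact Or.inl (hother T hT).1
        · exact Or.inr ⟨S, hSA, (hAstruct T hT S hSA v hvS).1, (hAstruct T hT S hSA v hvS).2⟩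
    have hBdisj : ∀ T ∈ M₀, ∀ T' ∈ M₀, T ≠ T' →
        Disjoint (insert (root T) (F T)) (insert (root T') (F T')) := by
      intro T hT T' hT' hne
      have hrr : root T ≠ root T' := by
        intro h
        have h1 := (hroot T' hT').1
        rw [← h] at h1
        exact Finset.disjoint_left.mp (hdisj₀ T hT T' hT' hne) (hroot T hT).1 h1
      rw [Finset.disjoint_left]
      intro v hv hv'
      rcases hvert T hT v hv with hvT | ⟨S, hSA, hSeq, hp⟩
      · rcases hvert T' hT' v hv' with hvT' | ⟨S', hSA', hSeq', hp'⟩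
        · exact Finset.disjoint_left.mp (hdisj₀ T hT T' hT' hne) hvT hvT'
        · have hS'neT : S' ≠ T := by
            intro h
            exact Finset.disjoint_left.mp (hdisj₀ T hT T' hT' hne)
              (h ▸ ((hAmem T' S').mp hSA').2.2) (hroot T' hT').1
          exact hp' T (hM₀M hT) (fun h => hS'neT h.symm) hvT
      · rcases hvert T' hT' v hv' with hvT' | ⟨S', hSA', hSeq', hp'⟩
        · have hSneT' : S ≠ T' := by
            intro h
            exact Finset.disjoint_left.mp (hdisj₀ T' hT' T hT (Ne.symm hne))
              (h ▸ ((hAmem T S).mp hSA).2.2) (hroot T hT).1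
          exact hp T' (hM₀M hT') (fun h => hSneT' h.symm) hvT'
        · by_cases hSS : S = S'
          · subst hSS
            have h1 : root T' ∈ S := ((hAmem T' S).mp hSA').2.2
            have h2 : root T ∈ S := ((hAmem T S).mp hSA).2.2
            rw [hSeq] at h1
            rw [hSeq'] at h2
            rcases Finset.mem_insert.mp h1 with h1 | h1
            · exact hrr h1.symm
            · rcases Finset.mem_insert.mp h2 with h2 | h2
              · exact hrr h2
              · rw [Finset.mem_singleton.mp h1, ← Finset.mem_singleton.mp h2] at hrr
                exact hrr rfl
          · refine hp S' ((hAmem T' S').mp hSA').1 (fun h => hSS h.symm) ?_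
            rw [hSeq']
            exact Finset.mem_insert.mpr (Or.inr (Finset.mem_singleton_self v))
    have hstems : ∀ T ∈ M₀, stems (root T, F T) = insert T (A T) := by
      intro T hT
      ext S
      simp only [stems, Finset.mem_image]
      constructor
      · rintro ⟨y, hy, rfl⟩
        rcases (hFmem T y).mp hy with rfl | ⟨S', hS'A, hyS'⟩
        · exact Finset.mem_insert.mpr (Or.inl (hTpair T hT).symm)
        · rw [← (hAstruct T hT S' hS'A y hyS').1]
          exact Finset.mem_insert.mpr (Or.inr hS'A)
      · intro hS
        rcases Finset.mem_insert.mp hS with rfl | hSA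
        · exact ⟨other S, (hFmem S (other S)).mpr (Or.inl rfl), (hTpair S hT).symm⟩
        · obtain ⟨hSM, hSne, hrS⟩ := (hAmem T S).mp hSA
          have hne : (S.erase (root T)).Nonempty := by
            rw [← Finset.card_pos, Finset.card_erase_of_mem hrS, hcard2 S hSM]
            omega
          obtain ⟨a, ha⟩ := hne
          exact ⟨a, (hFmem T a).mpr (Or.inr ⟨S, hSA, ha⟩), ((hAstruct T hT S hSA a ha).1).symm⟩
    -- counting
    have hDdisj : ∀ T ∈ M₀, ∀ S ∈ A T, ∀ S' ∈ A T, S ≠ S' →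
        Disjoint (S.erase (root T)) (S'.erase (root T)) := by
      intro T hT S hS S' hS' hne
      rw [Finset.disjoint_left]
      intro v hv hv'
      exact (hAstruct T hT S hS v hv).2 S' ((hAmem T S').mp hS').1 (Ne.symm hne)
        (Finset.mem_of_mem_erase hv')
    have hotherD : ∀ T ∈ M₀, other T ∉ (A T).biUnion (fun S => S.erase (root T)) := by
      intro T hT h
      rw [Finset.mem_biUnion] at h
      obtain ⟨S, hSA, hmem⟩ := h
      exact (hAstruct T hT S hSA _ hmem).2 T (hM₀M hT) (Ne.symm ((hAmem T S).mp hSA).2.1)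
        (hother T hT).1
    have hFcard : ∀ T ∈ M₀, (F T).card = (A T).card + 1 := by
      intro T hT
      have h1 : (F T).card = ((A T).biUnion (fun S => S.erase (root T))).card + 1 := by
        rw [hFdef]
        simp only
        rw [Finset.card_insert_of_notMem (hotherD T hT)]
      rw [h1, Finset.card_biUnion (hDdisj T hT)]
      have h2' : ∀ S ∈ A T, (S.erase (root T)).card = 1 := by
        intro S hS
        rw [Finset.card_erase_of_mem ((hAmem T S).mp hS).2.2, hcard2 S ((hAmem T S).mp hS).1]
      rw [Finset.sum_congr rfl h2', Finset.sum_const, smul_eq_mul, mul_one]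
    have hAunion : M₀.biUnion A = M \ M₀ := by
      ext S
      rw [Finset.mem_biUnion, Finset.mem_sdiff]
      constructor
      · rintro ⟨T, hT, hSA⟩
        exact ⟨((hAmem T S).mp hSA).1, hAnotM₀ T hT S hSA⟩
      · rintro ⟨hSM, hSM₀⟩
        exact hmem_attach S hSM hSM₀
    have hAsum : ∑ T ∈ M₀, (A T).card = (M \ M₀).card := by
      rw [← hAunion]
      exact (Finset.card_biUnion (fun T hT T' hT' hne => Finset.disjoint_left.mpr
        (fun S hS hS' => hAuniq T hT T' hT' hne S hS hS'))).symm
    have hm₀le : M₀.card ≤ i := by rw [← hi]; exact Finset.card_le_card hM₀M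
    have hsumF : ∑ T ∈ M₀, (F T).card = i := by
      rw [Finset.sum_congr rfl hFcard, Finset.sum_add_distrib, hAsum,
        Finset.card_sdiff_of_subset hM₀M, hi, Finset.sum_const, smul_eq_mul, mul_one]
      omega
    have hVunion : M₀.biUnion (fun T => insert (root T) (F T)) = unionEdges M := by
      ext v
      rw [Finset.mem_biUnion, hmemU]
      constructor
      · rintro ⟨T, hT, hv⟩
        rcases hvert T hT v hv with hvT | ⟨S, hSA, hSeq, _⟩
        · exact ⟨T, hM₀M hT, hvT⟩
        · exact ⟨S, ((hAmem T S).mp hSA).1, by rw [hSeq]; simp⟩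
      · rintro ⟨S, hSM, hvS⟩
        by_cases hS₀ : S ∈ M₀
        · refine ⟨S, hS₀, ?_⟩
          rw [hTpair S hS₀] at hvS
          rcases Finset.mem_insert.mp hvS with rfl | hvS
          · exact Finset.mem_insert_self _ _
          · exact Finset.mem_insert.mpr (Or.inr ((hFmem S v).mpr
              (Or.inl (Finset.mem_singleton.mp hvS))))
        · obtain ⟨T, hT, hSA⟩ := hmem_attach S hSM hS₀
          refine ⟨T, hT, ?_⟩
          by_cases hvr : v = root T
          · rw [hvr]; exact Finset.mem_insert_self _ _
          · exact Finset.mem_insert.mpr (Or.inr ((hFmem T v).mpr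
              (Or.inr ⟨S, hSA, Finset.mem_erase.mpr ⟨hvr, hvS⟩⟩)))
    have hVcard : ∑ T ∈ M₀, (insert (root T) (F T)).card = i + j := by
      rw [← hj, ← hVunion]
      exact (Finset.card_biUnion (fun T hT T' hT' hne => hBdisj T hT T' hT' hne)).symm
    have hM₀j : M₀.card = j := by
      rw [Finset.sum_congr rfl (fun T hT => Finset.card_insert_of_notMem (hFroot T hT)),
        Finset.sum_add_distrib, hsumF, Finset.sum_const, smul_eq_mul, mul_one] at hVcard
      omega
    have hinjS : Set.InjOn (fun T => (root T, F T)) ↑M₀ := by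
      intro T hT T' hT' heq
      simp only [Finset.mem_coe] at hT hT'
      by_contra hne
      have h1 : root T = root T' := congrArg Prod.fst heq
      have h2 := (hroot T' hT').1
      rw [← h1] at h2
      exact Finset.disjoint_left.mp (hdisj₀ T hT T' hT' hne) (hroot T hT).1 h2
    have hinj' : ∀ T ∈ M₀, ∀ T' ∈ M₀, (root T, F T) = (root T', F T') → T = T' :=
      fun T hT T' hT' heq => hinjS (Finset.mem_coe.mpr hT) (Finset.mem_coe.mpr hT') heq
    -- the choice function
    have hfex : ∃ f : V × Finset V → V, ∀ b : V × Finset V,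
        (∃ y ∈ b.2, ({b.1, y} : Finset V) ∈ M₀) → f b ∈ b.2 ∧ ({b.1, f b} : Finset V) ∈ M₀ := by
      refine ⟨fun b => if h : ∃ y ∈ b.2, ({b.1, y} : Finset V) ∈ M₀ then h.choose else b.1,
        fun b hb => ?_⟩
      simp only [dif_pos hb]
      exact ⟨hb.choose_spec.1, hb.choose_spec.2⟩
    obtain ⟨f, hfspec⟩ := hfex
    have hfT : ∀ T ∈ M₀, f (root T, F T) ∈ F T ∧ ({root T, f (root T, F T)} : Finset V) = T := by
      intro T hT
      obtain ⟨h1, h2⟩ := hfspec (root T, F T)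
        ⟨other T, (hFmem T (other T)).mpr (Or.inl rfl), by rw [← hTpair T hT]; exact hT⟩
      refine ⟨h1, ?_⟩
      by_contra hne
      exact Finset.disjoint_left.mp (hdisj₀ _ h2 T hT hne)
        (Finset.mem_insert_self _ _) (hroot T hT).1
    refine ⟨M₀.image (fun T => (root T, F T)), ⟨?_, ?_, ?_⟩, ?_, ?_, ?_⟩
    · -- bouquets
      intro b hb
      rw [Finset.mem_image] at hb
      obtain ⟨T, hT, rfl⟩ := hb
      refine ⟨⟨other T, (hFmem T (other T)).mpr (Or.inl rfl)⟩, hFroot T hT, ?_⟩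
      intro y hy
      rcases (hFmem T y).mp hy with rfl | ⟨S, hSA, hyS⟩
      · rw [← hTpair T hT]
        exact hME (hM₀M hT)
      · rw [← (hAstruct T hT S hSA y hyS).1]
        exact hME ((hAmem T S).mp hSA).1
    · -- pairwise disjoint
      intro b hb b' hb' hne
      rw [Finset.mem_image] at hb hb'
      obtain ⟨T, hT, rfl⟩ := hb
      obtain ⟨T', hT', rfl⟩ := hb'
      have hTne : T ≠ T' := fun h => hne (by rw [h])
      exact hBdisj T hT T' hT' hTne
    · -- choice of stems
      refine ⟨f, ?_, ?_⟩
      · intro b hb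
        rw [Finset.mem_image] at hb
        obtain ⟨T, hT, rfl⟩ := hb
        exact (hfT T hT).1
      · have himg : ((M₀.image (fun T => (root T, F T))).image
            (fun b => ({b.1, f b} : Finset V))) = M₀ := by
          rw [Finset.image_image]
          rw [show ((fun b : V × Finset V => ({b.1, f b} : Finset V)) ∘
            (fun T => (root T, F T))) = fun T => ({root T, f (root T, F T)} : Finset V) from rfl]
          have : ∀ T ∈ M₀, ({root T, f (root T, F T)} : Finset V) = id T :=
            fun T hT => (hfT T hT).2
          rw [Finset.image_congr (fun T hT => this T (Finset.mem_coe.mp hT)), Finset.image_id]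
        rw [himg]
        exact hIM₀
    · -- total number of flowers
      rw [Finset.sum_image hinj']
      exact hsumF
    · -- number of bouquets
      rw [Finset.card_image_of_injOn hinjS]
      exact hM₀j
    · -- stems
      ext S
      rw [Finset.mem_biUnion]
      constructor
      · rintro ⟨b, hb, hSb⟩
        rw [Finset.mem_image] at hb
        obtain ⟨T, hT, rfl⟩ := hb
        rw [hstems T hT] at hSb
        rcases Finset.mem_insert.mp hSb with rfl | hSA
        · exact hM₀M hT
        · exact ((hAmem T S).mp hSA).1
      · intro hS
        by_cases hS₀ : S ∈ M₀
        · exact ⟨(root S, F S), Finset.mem_image_of_mem _ hS₀,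
            by rw [hstems S hS₀]; exact Finset.mem_insert_self _ _⟩
        · obtain ⟨T, hT, hSA⟩ := hmem_attach S hS hS₀
          exact ⟨(root T, F T), Finset.mem_image_of_mem _ hT,
            by rw [hstems T hT]; exact Finset.mem_insert.mpr (Or.inr hSA)⟩
end

section
/- Let G be a finite simple graph. Every self semi-disjoint set in G (regarded as a 2-uniform simple hypergraph) is a self disjoint set in G. -/
variable {V : Type*} [DecidableEq V] [Fintype V]

/-- in a graph (a 2-uniform simple hypergraph), every self
semi-disjoint set is a self disjoint set. -/
theorem selfSemiDisjoint_isSelfDisjoint_of_graph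
    (E : Finset (Finset V)) (hH : IsSimpleHypergraph E)
    (h2 : ∀ S ∈ E, S.card = 2)
    (M : Finset (Finset V)) (hM : IsSelfSemiDisjointSet E M) :
    IsSelfDisjointSet E M := by
  classical
  obtain ⟨hME, hpriv, M₀, hM₀M, ⟨⟨hM₀E, hsemi⟩, hcov⟩⟩ := hM
  -- every edge of M has a private vertex
  have hpriv' : ∀ S ∈ M, ∃ x ∈ S, ∀ T ∈ M, T ≠ S → x ∉ T := by
    intro S hS
    obtain ⟨x, hxS, hx⟩ := Finset.not_subset.mp (hpriv S hS)
    refine ⟨x, hxS, fun T hT hTS hxT => hx ?_⟩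
    simp only [unionEdges, Finset.mem_biUnion, id]
    exact ⟨T, Finset.mem_erase.mpr ⟨hTS, hT⟩, hxT⟩
  set Shared : V → Prop := fun v => ∃ T₁ ∈ M₀, ∃ T₂ ∈ M₀, T₁ ≠ T₂ ∧ v ∈ T₁ ∧ v ∈ T₂
    with hSharedDef
  -- pick an edge of M₀ for each vertex in some edge of M₀
  have hex : ∀ v : V, ∃ T : Finset V, (∃ S ∈ M₀, v ∈ S) → T ∈ M₀ ∧ v ∈ T := by
    intro v
    by_cases h : ∃ S ∈ M₀, v ∈ S
    · obtain ⟨S, hS, hv⟩ := h; exact ⟨S, fun _ => ⟨hS, hv⟩⟩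
    · exact ⟨∅, fun h' => absurd h' h⟩
  choose pick hpick using hex
  -- in a 2-element set, two elements different from a given element coincide
  have htwo : ∀ T : Finset V, T.card = 2 → ∀ x ∈ T, ∀ u ∈ T, ∀ w ∈ T,
      u ≠ x → w ≠ x → u = w := by
    intro T hT x hx u hu w hw hux hwx
    have h1 : (T.erase x).card = 1 := by
      rw [Finset.card_erase_of_mem hx, hT]
    obtain ⟨a, ha⟩ := Finset.card_eq_one.mp h1
    have hu' : u ∈ T.erase x := Finset.mem_erase.mpr ⟨hux, hu⟩
    have hw' : w ∈ T.erase x := Finset.mem_erase.mpr ⟨hwx, hw⟩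
    rw [ha, Finset.mem_singleton] at hu' hw'
    rw [hu', hw']
  -- each edge of M₀ has a private vertex, which is not shared
  have hkey : ∀ T ∈ M₀, ∃ x ∈ T, (∀ T' ∈ M, T' ≠ T → x ∉ T') ∧
      ∀ w ∈ T, Shared w → w ≠ x := by
    intro T hT
    obtain ⟨x, hxT, hx⟩ := hpriv' T (hM₀M hT)
    refine ⟨x, hxT, hx, fun w _ hw hwx => ?_⟩
    obtain ⟨T₁, h1, T₂, h2', hne, hw1, hw2⟩ := hw
    subst hwx
    by_cases hT1 : T₁ = T
    · exact hx T₂ (hM₀M h2') (fun h => hne (hT1.trans h.symm)) hw2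
    · exact hx T₁ (hM₀M h1) hT1 hw1
  -- the refined matching
  set M₁ : Finset (Finset V) :=
    M₀.filter (fun T => ∀ v ∈ T, Shared v → T = pick v) with hM₁def
  have hM₁M₀ : M₁ ⊆ M₀ := Finset.filter_subset _ _
  -- pick of a shared vertex is in M₁
  have hpickM₁ : ∀ v, Shared v → pick v ∈ M₁ ∧ v ∈ pick v := by
    intro v hv
    obtain ⟨T₁, h1, T₂, h2', hne, hw1, hw2⟩ := hv
    obtain ⟨hpm, hvp⟩ := hpick v ⟨T₁, h1, hw1⟩
    refine ⟨Finset.mem_filter.mpr ⟨hpm, fun w hw hws => ?_⟩, hvp⟩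
    obtain ⟨x, hxT, _, hxns⟩ := hkey (pick v) hpm
    have hwv : w = v := htwo (pick v) (h2 _ (hM₀E hpm)) x hxT w hw v hvp
      (hxns w hw hws) (hxns v hvp ⟨T₁, h1, T₂, h2', hne, hw1, hw2⟩)
    rw [hwv]
  -- card of S \ T is 1 when they share a vertex but S ⊄ T
  have hone : ∀ S T : Finset V, S ∈ E → ∀ v, v ∈ S → v ∈ T → ¬ S ⊆ T →
      (S \ T).card = 1 := by
    intro S T hS v hvS hvT hst
    have h2S := h2 S hS
    have hsub : S \ T ⊆ S.erase v := by
      intro x hx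
      rw [Finset.mem_sdiff] at hx
      exact Finset.mem_erase.mpr ⟨fun h => hx.2 (h ▸ hvT), hx.1⟩
    have hle : (S \ T).card ≤ 1 := by
      calc (S \ T).card ≤ (S.erase v).card := Finset.card_le_card hsub
        _ = 1 := by rw [Finset.card_erase_of_mem hvS, h2S]
    obtain ⟨x, hx, hxn⟩ := Finset.not_subset.mp hst
    have hpos : 0 < (S \ T).card :=
      Finset.card_pos.mpr ⟨x, Finset.mem_sdiff.mpr ⟨hx, hxn⟩⟩
    omega
  refine ⟨hME, hpriv, M₁, fun T hT => hM₀M (hM₁M₀ hT), ⟨⟨fun T hT => hM₀E (hM₁M₀ hT), ?_⟩, ?_⟩, ?_⟩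
  · -- semi-induced
    intro S hS hSM₁
    by_cases hSM₀ : S ∈ M₀
    · obtain ⟨x, hxS, hx, _⟩ := hkey S hSM₀
      refine Finset.not_subset.mpr ⟨x, hxS, fun hxu => ?_⟩
      simp only [unionEdges, Finset.mem_biUnion, id] at hxu
      obtain ⟨T', hT', hxT'⟩ := hxu
      exact hx T' (hM₀M (hM₁M₀ hT')) (fun h => hSM₁ (h ▸ hT')) hxT'
    · intro hsub
      refine hsemi S hS hSM₀ (hsub.trans ?_)
      exact Finset.biUnion_subset_biUnion_of_subset_left _ hM₁M₀
  · -- pairwise disjoint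
    intro S hS T hT hne
    rw [Finset.disjoint_left]
    intro v hvS hvT
    have hsh : Shared v := ⟨S, hM₁M₀ hS, T, hM₁M₀ hT, hne, hvS, hvT⟩
    have hS' := (Finset.mem_filter.mp hS).2 v hvS hsh
    have hT' := (Finset.mem_filter.mp hT).2 v hvT hsh
    exact hne (hS'.trans hT'.symm)
  · -- covering
    intro S hS hSM₁
    by_cases hSM₀ : S ∈ M₀
    · have hf := hSM₁
      rw [hM₁def, Finset.mem_filter, not_and] at hf
      have := hf hSM₀
      push_neg at this
      obtain ⟨v, hvS, hvsh, hvne⟩ := this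
      obtain ⟨hpM₁, hvp⟩ := hpickM₁ v hvsh
      refine ⟨pick v, hpM₁, hone S (pick v) (hME (hM₀M hSM₀)) v hvS hvp ?_⟩
      intro hsub
      exact hvne (hH.2 S (hME (hM₀M hSM₀)) (pick v) (hM₀E (hM₁M₀ hpM₁)) hsub)
    · obtain ⟨T, hT, hcard⟩ := hcov S hS hSM₀
      by_cases hTM₁ : T ∈ M₁
      · exact ⟨T, hTM₁, hcard⟩
      · -- find shared common vertex
        have hST : S ≠ T := fun h => hSM₀ (h ▸ hT)
        have hSE : S ∈ E := hME hS
        have hScard := h2 S hSE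
        have hint : (S ∩ T).card = 1 := by
          have := Finset.card_sdiff_add_card_inter S T
          omega
        obtain ⟨v, hv⟩ := Finset.card_eq_one.mp hint
        have hvST : v ∈ S ∩ T := hv ▸ Finset.mem_singleton_self v
        have hvS : v ∈ S := (Finset.mem_inter.mp hvST).1
        have hvT : v ∈ T := (Finset.mem_inter.mp hvST).2
        obtain ⟨x, hxT, hx, hxns⟩ := hkey T hT
        -- x is not in S
        have hvx : v ≠ x := fun h => hx S hS hST (h ▸ hvS)
        -- T fails the filter: some shared w ∈ T with T ≠ pick w; w = v
        have hf := hTM₁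
        rw [hM₁def, Finset.mem_filter, not_and] at hf
        have := hf hT
        push_neg at this
        obtain ⟨w, hwT, hwsh, _⟩ := this
        have hwv : w = v := htwo T (h2 T (hM₀E hT)) x hxT w hwT v hvT
          (hxns w hwT hwsh) hvx
        have hvsh : Shared v := hwv ▸ hwsh
        obtain ⟨hpM₁, hvp⟩ := hpickM₁ v hvsh
        refine ⟨pick v, hpM₁, hone S (pick v) hSE v hvS hvp ?_⟩
        intro hsub
        have := hH.2 S hSE (pick v) (hM₀E (hM₁M₀ hpM₁)) hsub
        exact hSM₁ (this ▸ hpM₁)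
end

section
/- Let G be a finite simple graph with at least one edge. Then the maximum size of a self disjoint set in G, the maximum size of a self semi-disjoint set in G, and the maximum total number of flowers of a strongly disjoint set of bouquets of G are all equal (that is, d_{1,G} = d_{2,G} = d_G). -/
variable {V : Type*} [DecidableEq V] [Fintype V]

/- ### Auxiliary lemmas -/

lemma mem_unionEdges' {M : Finset (Finset V)} {x : V} :
    x ∈ unionEdges M ↔ ∃ S ∈ M, x ∈ S := by simp [unionEdges]

/-- Claim A: from a strongly disjoint set of bouquets, get a self disjoint set. -/
lemma bouquets_to_selfDisjoint (E : Finset (Finset V))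
    (B : Finset (V × Finset V)) (hB : IsStronglyDisjointBouquets E B) :
    ∃ M, IsSelfDisjointSet E M ∧ M.card = ∑ b ∈ B, b.2.card := by
  obtain ⟨hbq, hdisj, f, hf, hfim⟩ := hB
  set M : Finset (Finset V) := B.biUnion stems with hMdef
  have hmemM : ∀ S, S ∈ M ↔ ∃ b ∈ B, ∃ y ∈ b.2, ({b.1, y} : Finset V) = S := by
    intro S; simp [hMdef, stems]
  refine ⟨M, ⟨?_, ?_, ?_⟩, ?_⟩
  · -- M ⊆ E
    intro S hS
    obtain ⟨b, hb, y, hy, rfl⟩ := (hmemM S).mp hS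
    exact (hbq b hb).2.2 y hy
  · -- self condition
    intro S hS hsub
    obtain ⟨b, hb, y, hy, rfl⟩ := (hmemM _).mp hS
    have hyx : y ≠ b.1 := fun h => (hbq b hb).2.1 (h ▸ hy)
    have hyS : y ∈ ({b.1, y} : Finset V) := by simp
    obtain ⟨T, hT, hyT⟩ := mem_unionEdges'.mp (hsub hyS)
    rw [Finset.mem_erase] at hT
    obtain ⟨hTne, hTM⟩ := hT
    obtain ⟨b', hb', y', hy', rfl⟩ := (hmemM T).mp hTM
    by_cases hbb : b' = b
    · subst hbb
      rcases Finset.mem_insert.mp hyT with h | h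
      · exact hyx h
      · rw [Finset.mem_singleton] at h
        exact hTne (by rw [h])
    · have h1 : y ∈ bouquetVerts b := Finset.mem_insert.mpr (Or.inr hy)
      have h2 : y ∈ bouquetVerts b' := by
        rcases Finset.mem_insert.mp hyT with h | h
        · exact Finset.mem_insert.mpr (Or.inl h)
        · rw [Finset.mem_singleton] at h
          exact Finset.mem_insert.mpr (Or.inr (h ▸ hy'))
      exact Finset.disjoint_left.mp
        (hdisj b hb b' hb' (fun h => hbb h.symm)) h1 h2
  · -- the induced matching inside
    refine ⟨_, ?_, hfim, ?_⟩
    · intro S hS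
      obtain ⟨b, hb, rfl⟩ := Finset.mem_image.mp hS
      exact (hmemM _).mpr ⟨b, hb, f b, hf b hb, rfl⟩
    · intro S hS hS0
      obtain ⟨b, hb, y, hy, rfl⟩ := (hmemM S).mp hS
      refine ⟨{b.1, f b}, Finset.mem_image.mpr ⟨b, hb, rfl⟩, ?_⟩
      have hyfb : y ≠ f b := by
        intro h; exact hS0 (Finset.mem_image.mpr ⟨b, hb, by rw [h]⟩)
      have hyx : y ≠ b.1 := fun h => (hbq b hb).2.1 (h ▸ hy)
      have hsd : ({b.1, y} : Finset V) \ {b.1, f b} = {y} := by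
        ext z
        simp only [Finset.mem_sdiff, Finset.mem_insert, Finset.mem_singleton]
        constructor
        · rintro ⟨h1 | h1, h2⟩
          · exact absurd (Or.inl h1) h2
          · exact h1
        · rintro rfl
          exact ⟨Or.inr rfl, by rintro (h | h); exacts [hyx h, hyfb h]⟩
      rw [hsd, Finset.card_singleton]
  · -- cardinality
    have hd : ∀ b ∈ B, ∀ b' ∈ B, b ≠ b' → Disjoint (stems b) (stems b') := by
      intro b hb b' hb' hne
      rw [Finset.disjoint_left]
      intro e he he'
      obtain ⟨y, hy, rfl⟩ := Finset.mem_image.mp he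
      obtain ⟨y', hy', heq⟩ := Finset.mem_image.mp he'
      have heq' : ({b'.1, y'} : Finset V) = {b.1, y} := heq
      have h1 : b.1 ∈ bouquetVerts b := Finset.mem_insert_self _ _
      have h2 : b.1 ∈ bouquetVerts b' := by
        have hm : b.1 ∈ ({b'.1, y'} : Finset V) := by rw [heq']; simp
        rcases Finset.mem_insert.mp hm with h | h
        · exact Finset.mem_insert.mpr (Or.inl h)
        · rw [Finset.mem_singleton] at h
          exact Finset.mem_insert.mpr (Or.inr (h ▸ hy'))
      exact Finset.disjoint_left.mp (hdisj b hb b' hb' hne) h1 h2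
    rw [hMdef, Finset.card_biUnion hd]
    refine Finset.sum_congr rfl fun b hb => ?_
    apply Finset.card_image_of_injOn
    intro y hy y' hy' heq
    have heq' : ({b.1, y} : Finset V) = {b.1, y'} := heq
    have hyx : y ≠ b.1 := fun h => (hbq b hb).2.1 (h ▸ hy)
    have hm : y ∈ ({b.1, y'} : Finset V) := by rw [← heq']; simp
    rcases Finset.mem_insert.mp hm with h | h
    · exact absurd h hyx
    · exact Finset.mem_singleton.mp h

/-- The empty family is an induced matching when all edges have two vertices. -/
lemma emptyInducedMatching (E : Finset (Finset V)) (h2 : ∀ S ∈ E, S.card = 2) :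
    IsInducedMatching E (∅ : Finset (Finset V)) := by
  refine ⟨⟨Finset.empty_subset _, fun S hS _ hsub => ?_⟩, by simp⟩
  have hSe : S = ∅ := Finset.subset_empty.mp (by simpa [unionEdges] using hsub)
  have hc := h2 S hS
  rw [hSe, Finset.card_empty] at hc
  exact absurd hc (by norm_num)

/-- Claim C: from a self semi-disjoint set, get strongly disjoint bouquets with
the same total number of flowers. -/
lemma semiDisjoint_to_bouquets (E : Finset (Finset V))
    (h2 : ∀ S ∈ E, S.card = 2) (M : Finset (Finset V))
    (hM : IsSelfSemiDisjointSet E M) :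
    ∃ B : Finset (V × Finset V),
      IsStronglyDisjointBouquets E B ∧ (∑ b ∈ B, b.2.card) = M.card := by
  classical
  obtain ⟨hME, hself, M₀, hM₀M, hsemi, hatt⟩ := hM
  rcases M.eq_empty_or_nonempty with rfl | hMne
  · exact ⟨∅, ⟨by simp, by simp,
      fun b => b.1, by simp, by simpa using emptyInducedMatching E h2⟩, by simp⟩
  -- choose free vertices
  have hvex : ∀ S ∈ M, ∃ a, a ∈ S ∧ a ∉ unionEdges (M.erase S) := by
    intro S hS
    obtain ⟨a, ha1, ha2⟩ := Finset.not_subset.mp (hself S hS)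
    exact ⟨a, ha1, ha2⟩
  have hV : Nonempty V := by
    obtain ⟨S, hS⟩ := hMne
    obtain ⟨a, _, _⟩ := hvex S hS
    exact ⟨a⟩
  choose! v hv1 hv2 using hvex
  -- choose the other endpoint
  have hwex : ∀ S ∈ M, ∃ b, b ∈ S ∧ b ≠ v S ∧ S = {b, v S} := by
    intro S hS
    have hc : S.card = 2 := h2 S (hME hS)
    have hc1 : (S.erase (v S)).card = 1 := by
      rw [Finset.card_erase_of_mem (hv1 S hS), hc]
    obtain ⟨b, hb⟩ := Finset.card_eq_one.mp hc1
    have hbmem : b ∈ S.erase (v S) := by rw [hb]; simp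
    have hbS : b ∈ S := Finset.mem_of_mem_erase hbmem
    have hbne : b ≠ v S := Finset.ne_of_mem_erase hbmem
    refine ⟨b, hbS, hbne, (Finset.eq_of_subset_of_card_le ?_ ?_).symm⟩
    · intro x hx
      rcases Finset.mem_insert.mp hx with h | h
      · exact h ▸ hbS
      · exact (Finset.mem_singleton.mp h) ▸ hv1 S hS
    · rw [hc, Finset.card_insert_of_notMem (by simp [hbne]),
        Finset.card_singleton]
  choose! w hw1 hw2 hw3 using hwex
  -- fact 1 : the free vertex of S belongs to no other member
  have fact1 : ∀ S ∈ M, ∀ S' ∈ M, v S ∈ S' → S = S' := by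
    intro S hS S' hS' hmem
    by_contra hne
    exact hv2 S hS (mem_unionEdges'.mpr
      ⟨S', Finset.mem_erase.mpr ⟨Ne.symm hne, hS'⟩, hmem⟩)
  have factvw : ∀ S ∈ M, ∀ S' ∈ M, v S ≠ w S' := by
    intro S hS S' hS' h
    have hm : v S ∈ S' := h ▸ hw1 S' hS'
    have heq := fact1 S hS S' hS' hm
    subst heq
    exact hw2 S hS h.symm
  have factvv : ∀ S ∈ M, ∀ S' ∈ M, v S = v S' → S = S' := by
    intro S hS S' hS' h
    exact fact1 S hS S' hS' (h ▸ hv1 S' hS')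
  -- fact 2 : every member shares its non-free vertex with a member of M₀
  have fact2 : ∀ S ∈ M, ∃ T ∈ M₀, w T = w S := by
    intro S hS
    by_cases hS0 : S ∈ M₀
    · exact ⟨S, hS0, rfl⟩
    obtain ⟨T, hT, hcard⟩ := hatt S hS hS0
    have hTM : T ∈ M := hM₀M hT
    have hSne : S ≠ T := by
      rintro rfl
      simp at hcard
    have hvST : v S ∉ T := fun h => hSne (fact1 S hS T hTM h)
    have hvsd : v S ∈ S \ T := Finset.mem_sdiff.mpr ⟨hv1 S hS, hvST⟩
    have hsd : S \ T = {v S} := by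
      obtain ⟨a, ha⟩ := Finset.card_eq_one.mp hcard
      rw [ha] at hvsd ⊢
      rw [Finset.mem_singleton.mp hvsd]
    have hwT : w S ∈ T := by
      by_contra h
      have hm : w S ∈ S \ T := Finset.mem_sdiff.mpr ⟨hw1 S hS, h⟩
      rw [hsd, Finset.mem_singleton] at hm
      exact hw2 S hS hm
    rw [hw3 T hTM] at hwT
    rcases Finset.mem_insert.mp hwT with h | h
    · exact ⟨T, hT, h.symm⟩
    · rw [Finset.mem_singleton] at h
      exact absurd (fact1 T hTM S hS (h ▸ hw1 S hS)) (Ne.symm hSne)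
  -- the bouquets
  set Fl : V → Finset V := fun x => (M.filter fun S => w S = x).image v with hFl
  set B : Finset (V × Finset V) := (M.image w).image fun x => (x, Fl x) with hB
  have hmemFl : ∀ x y, y ∈ Fl x ↔ ∃ S ∈ M, w S = x ∧ v S = y := by
    intro x y; simp only [hFl, Finset.mem_image, Finset.mem_filter]; tauto
  have hmemB : ∀ b, b ∈ B ↔ ∃ x ∈ M.image w, (x, Fl x) = b := by
    intro b; simp [hB]
  -- the choice of stems
  have hTex : ∀ x ∈ M.image w, ∃ T, T ∈ M₀ ∧ w T = x := by
    intro x hx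
    obtain ⟨S, hS, rfl⟩ := Finset.mem_image.mp hx
    obtain ⟨T, hT, hwT⟩ := fact2 S hS
    exact ⟨T, hT, hwT⟩
  set Tof : V → Finset V := fun x =>
    if h : ∃ T, T ∈ M₀ ∧ w T = x then h.choose else ∅ with hTofdef
  have hTof1 : ∀ x ∈ M.image w, Tof x ∈ M₀ ∧ w (Tof x) = x := by
    intro x hx
    have h := hTex x hx
    simp only [hTofdef, dif_pos h]
    exact ⟨h.choose_spec.1, h.choose_spec.2⟩
  set f : V × Finset V → V := fun b => v (Tof b.1) with hf
  have hstem : ∀ x ∈ M.image w, ({x, f (x, Fl x)} : Finset V) = Tof x := by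
    intro x hx
    obtain ⟨hT0, hwT⟩ := hTof1 x hx
    have h3 : Tof x = {w (Tof x), v (Tof x)} := hw3 _ (hM₀M hT0)
    rw [h3, hwT]
  -- description of the chosen stems
  have hM'mem : ∀ X ∈ B.image (fun b => ({b.1, f b} : Finset V)),
      ∃ x ∈ M.image w, X = Tof x ∧ w X = x := by
    intro X hX
    obtain ⟨b, hb, rfl⟩ := Finset.mem_image.mp hX
    obtain ⟨x, hx, rfl⟩ := (hmemB b).mp hb
    refine ⟨x, hx, hstem x hx, ?_⟩
    show w ({x, f (x, Fl x)} : Finset V) = x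
    rw [hstem x hx]
    exact (hTof1 x hx).2
  refine ⟨B, ⟨?_, ?_, f, ?_, ⟨⟨?_, ?_⟩, ?_⟩⟩, ?_⟩
  · -- bouquets
    intro b hb
    obtain ⟨x, hx, rfl⟩ := (hmemB b).mp hb
    obtain ⟨S₀, hS₀, rfl⟩ := Finset.mem_image.mp hx
    refine ⟨⟨v S₀, (hmemFl _ _).mpr ⟨S₀, hS₀, rfl, rfl⟩⟩, ?_, ?_⟩
    · intro h
      obtain ⟨S, hS, hwS, hvS⟩ := (hmemFl _ _).mp h
      exact factvw S hS S hS (hvS.trans hwS.symm)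
    · intro y hy
      obtain ⟨S, hS, hwS, hvS⟩ := (hmemFl _ _).mp hy
      have hyS : ({w S₀, y} : Finset V) = S := by
        rw [← hvS, ← hwS]; exact (hw3 S hS).symm
      rw [hyS]
      exact hME hS
  · -- pairwise vertex disjoint
    intro b hb b' hb' hne
    obtain ⟨x, hx, rfl⟩ := (hmemB b).mp hb
    obtain ⟨x', hx', rfl⟩ := (hmemB b').mp hb'
    have hxx : x ≠ x' := fun h => hne (by rw [h])
    rw [Finset.disjoint_left]
    intro t ht ht'
    simp only [bouquetVerts, Finset.mem_insert] at ht ht'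
    obtain ⟨Sx, hSx, rfl⟩ := Finset.mem_image.mp hx
    obtain ⟨Sx', hSx', rfl⟩ := Finset.mem_image.mp hx'
    rcases ht with rfl | ht
    · rcases ht' with h | h
      · exact hxx h
      · obtain ⟨S, hS, hwS, hvS⟩ := (hmemFl _ _).mp h
        exact factvw S hS Sx hSx hvS
    · obtain ⟨S, hS, hwS, hvS⟩ := (hmemFl _ _).mp ht
      rcases ht' with h | h
      · exact factvw S hS Sx' hSx' (hvS.trans h)
      · obtain ⟨S', hS', hwS', hvS'⟩ := (hmemFl _ _).mp h
        have heq : S = S' := factvv S hS S' hS' (hvS.trans hvS'.symm)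
        subst heq
        exact hxx (hwS ▸ hwS' ▸ rfl)
  · -- f picks flowers
    intro b hb
    obtain ⟨x, hx, rfl⟩ := (hmemB b).mp hb
    obtain ⟨hT0, hwT⟩ := hTof1 x hx
    exact (hmemFl _ _).mpr ⟨Tof x, hM₀M hT0, hwT, rfl⟩
  · -- chosen stems : contained in E
    intro X hX
    obtain ⟨x, hx, rfl, _⟩ := hM'mem X hX
    exact hsemi.1 (hTof1 x hx).1
  · -- chosen stems : semi-induced
    intro S hS hSnot hsub
    by_cases hS0 : S ∈ M₀
    · have hSM : S ∈ M := hM₀M hS0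
      obtain ⟨X, hX, hvX⟩ := mem_unionEdges'.mp (hsub (hv1 S hSM))
      obtain ⟨x, hx, rfl, _⟩ := hM'mem X hX
      have hXM : Tof x ∈ M := hM₀M (hTof1 x hx).1
      have heq : S = Tof x := fact1 S hSM _ hXM hvX
      rw [← heq] at hX
      exact hSnot hX
    · refine hsemi.2 S hS hS0 (hsub.trans ?_)
      intro a ha
      obtain ⟨X, hX, haX⟩ := mem_unionEdges'.mp ha
      obtain ⟨x, hx, rfl, _⟩ := hM'mem X hX
      exact mem_unionEdges'.mpr ⟨Tof x, (hTof1 x hx).1, haX⟩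
  · -- chosen stems : pairwise disjoint
    intro X hX Y hY hne
    obtain ⟨x, hx, rfl, hwX⟩ := hM'mem X hX
    obtain ⟨y, hy, rfl, hwY⟩ := hM'mem Y hY
    have hXM : Tof x ∈ M := hM₀M (hTof1 x hx).1
    have hYM : Tof y ∈ M := hM₀M (hTof1 y hy).1
    rw [Finset.disjoint_left]
    intro t htX htY
    rw [hw3 _ hXM] at htX
    rw [hw3 _ hYM] at htY
    rcases Finset.mem_insert.mp htX with rfl | htX
    · rcases Finset.mem_insert.mp htY with h | h
      · exact hne (by rw [← hwX, ← hwY, h])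
      · rw [Finset.mem_singleton] at h
        exact factvw _ hYM _ hXM h.symm
    · rw [Finset.mem_singleton] at htX
      subst htX
      rcases Finset.mem_insert.mp htY with h | h
      · exact factvw _ hXM _ hYM h
      · rw [Finset.mem_singleton] at h
        exact hne (factvv _ hXM _ hYM h)
  · -- total number of flowers
    have hinj : ∀ x ∈ M.image w, ∀ y ∈ M.image w,
        (fun x => (x, Fl x)) x = (fun x => (x, Fl x)) y → x = y := by
      intro x _ y _ h
      exact (Prod.ext_iff.mp h).1
    have hFlcard : ∀ x ∈ M.image w,
        (Fl x).card = (M.filter fun S => w S = x).card := by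
      intro x _
      apply Finset.card_image_of_injOn
      intro S hS S' hS' h
      exact factvv S (Finset.mem_filter.mp hS).1 S' (Finset.mem_filter.mp hS').1 h
    rw [hB, Finset.sum_image hinj, Finset.card_eq_sum_card_image w M]
    exact Finset.sum_congr rfl fun x hx => hFlcard x hx

/-- for a graph `G` with at least one edge, the maximum size of a
self disjoint set, the maximum size of a self semi-disjoint set and the maximum
total number of flowers of a strongly disjoint set of bouquets coincide:
`d_{1,G} = d_{2,G} = d_G`. -/
theorem d1_eq_d2_eq_dG
    (E : Finset (Finset V)) (hH : IsSimpleHypergraph E)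
    (h2 : ∀ S ∈ E, S.card = 2) (hne : E.Nonempty) :
    sSup {n : ℕ | ∃ M, IsSelfDisjointSet E M ∧ M.card = n} =
      sSup {n : ℕ | ∃ M, IsSelfSemiDisjointSet E M ∧ M.card = n} ∧
    sSup {n : ℕ | ∃ M, IsSelfDisjointSet E M ∧ M.card = n} =
      sSup {n : ℕ | ∃ B : Finset (V × Finset V),
        IsStronglyDisjointBouquets E B ∧ (∑ b ∈ B, b.2.card) = n} := by
  set A1 := {n : ℕ | ∃ M, IsSelfDisjointSet E M ∧ M.card = n}
  set A2 := {n : ℕ | ∃ M, IsSelfSemiDisjointSet E M ∧ M.card = n}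
  set A3 := {n : ℕ | ∃ B : Finset (V × Finset V),
      IsStronglyDisjointBouquets E B ∧ (∑ b ∈ B, b.2.card) = n}
  have s12 : A1 ⊆ A2 := by
    rintro n ⟨M, ⟨hsub, hself, M₀, hs, him, hatt⟩, hc⟩
    exact ⟨M, ⟨hsub, hself, M₀, hs, him.1, hatt⟩, hc⟩
  have s23 : A2 ⊆ A3 := by
    rintro n ⟨M, hM, rfl⟩
    obtain ⟨B, hB, hc⟩ := semiDisjoint_to_bouquets E h2 M hM
    exact ⟨B, hB, hc⟩
  have s31 : A3 ⊆ A1 := by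
    rintro n ⟨B, hB, rfl⟩
    obtain ⟨M, hM, hc⟩ := bouquets_to_selfDisjoint E B hB
    exact ⟨M, hM, hc⟩
  have h12 : A1 = A2 := Set.Subset.antisymm s12 (s23.trans s31)
  have h13 : A1 = A3 := Set.Subset.antisymm (s12.trans s23) s31
  exact ⟨by rw [h12], by rw [h13]⟩
end

section
/- Let d ≥ 2 and let H be a d-uniform simple hypergraph such that any two distinct edges with nonempty intersection meet in exactly d − 1 vertices. Let x be a simplicial vertex of H, let S be an edge of H containing x, and let z ∈ N(S). Then there exists an edge E of H with E \ S = {z} and x ∉ E. -/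
variable {V : Type*} [DecidableEq V] [Fintype V]

/-- The closed neighborhood `N[x]` of a vertex. -/
def closedNbhd (E : Finset (Finset V)) (x : V) : Finset V :=
  insert x ((E.filter fun S => x ∈ S).biUnion id)

/-- A simplicial vertex of a `d`-uniform hypergraph: every `d`-subset of `N[x]`
is an edge. -/
def IsSimplicialVertex (E : Finset (Finset V)) (d : ℕ) (x : V) : Prop :=
  ∀ T ⊆ closedNbhd E x, T.card = d → T ∈ E

/-- `N(S)`, the union of `T \ S` over all edges `T` meeting `S`. -/
def edgeNbhd (E : Finset (Finset V)) (S : Finset V) : Finset V :=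
  (E.filter fun T => (T ∩ S).Nonempty).biUnion fun T => T \ S

/-- in a `d`-uniform simple hypergraph in which any two distinct
meeting edges intersect in exactly `d - 1` vertices, if `x` is a simplicial
vertex, `S` an edge containing `x` and `z ∈ N(S)`, then there is an edge `T`
with `T \ S = {z}` and `x ∉ T`. -/
theorem exists_edge_diff_singleton
    (E : Finset (Finset V)) (d : ℕ) (hd : 2 ≤ d)
    (hH : IsSimpleHypergraph E) (hUnif : ∀ S ∈ E, S.card = d)
    (hInt : ∀ S ∈ E, ∀ T ∈ E, S ≠ T → (S ∩ T).Nonempty → (S ∩ T).card = d - 1)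
    (x : V) (hx : IsSimplicialVertex E d x)
    (S : Finset V) (hS : S ∈ E) (hxS : x ∈ S)
    (z : V) (hz : z ∈ edgeNbhd E S) :
    ∃ T ∈ E, T \ S = {z} ∧ x ∉ T := by
  simp only [edgeNbhd, Finset.mem_biUnion, Finset.mem_filter] at hz
  obtain ⟨T₀, ⟨hT₀E, hT₀S⟩, hzT₀⟩ := hz
  rw [Finset.mem_sdiff] at hzT₀
  obtain ⟨hzT₀, hzS⟩ := hzT₀
  have hne : T₀ ≠ S := fun h => hzS (h ▸ hzT₀)
  have hcard : (T₀ ∩ S).card = d - 1 := hInt T₀ hT₀E S hS hne hT₀S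
  have hdiff : (T₀ \ S).card = 1 := by
    have h1 : (T₀ \ S).card = T₀.card - (T₀ ∩ S).card := by
      rw [← Finset.sdiff_inter_self_left T₀ S,
        Finset.card_sdiff_of_subset Finset.inter_subset_left]
    rw [h1, hcard, hUnif T₀ hT₀E]
    omega
  have hTS : T₀ \ S = {z} := by
    obtain ⟨a, ha⟩ := Finset.card_eq_one.mp hdiff
    rw [ha]
    have : z ∈ ({a} : Finset V) := ha ▸ Finset.mem_sdiff.mpr ⟨hzT₀, hzS⟩
    rw [Finset.mem_singleton] at this
    rw [this]
  by_cases hxT : x ∈ T₀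
  · -- use simplicial vertex to build (S \ {x}) ∪ {z}
    have hxz : x ≠ z := fun h => hzS (h ▸ hxS)
    set T' := insert z (S.erase x) with hT'
    have hzN : z ∈ closedNbhd E x := by
      simp only [closedNbhd, Finset.mem_insert, Finset.mem_biUnion, Finset.mem_filter]
      exact Or.inr ⟨T₀, ⟨hT₀E, hxT⟩, hzT₀⟩
    have hSN : S ⊆ closedNbhd E x := by
      intro a ha
      simp only [closedNbhd, Finset.mem_insert, Finset.mem_biUnion, Finset.mem_filter]
      exact Or.inr ⟨S, ⟨hS, hxS⟩, ha⟩
    have hsub : T' ⊆ closedNbhd E x := by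
      intro a ha
      rw [hT', Finset.mem_insert] at ha
      rcases ha with rfl | ha
      · exact hzN
      · exact hSN (Finset.erase_subset _ _ ha)
    have hcardT' : T'.card = d := by
      rw [hT', Finset.card_insert_of_notMem
        (fun h => hzS (Finset.erase_subset _ _ h)),
        Finset.card_erase_of_mem hxS, hUnif S hS]
      omega
    refine ⟨T', hx T' hsub hcardT', ?_, ?_⟩
    · apply Finset.Subset.antisymm
      · intro a ha
        rw [Finset.mem_sdiff, hT', Finset.mem_insert] at ha
        rcases ha.1 with rfl | h
        · exact Finset.mem_singleton_self _
        · exact absurd (Finset.erase_subset _ _ h) ha.2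
      · intro a ha
        rw [Finset.mem_singleton] at ha
        subst ha
        exact Finset.mem_sdiff.mpr ⟨Finset.mem_insert_self _ _, hzS⟩
    · rw [hT', Finset.mem_insert]
      rintro (h | h)
      · exact hxz h
      · exact Finset.notMem_erase _ _ h
  · exact ⟨T₀, hT₀E, hTS, hxT⟩
end

section
/- Let d ≥ 2 and let H be a d-uniform simple hypergraph such that any two distinct edges with nonempty intersection meet in exactly d − 1 vertices. Let x be a simplicial vertex of H and S an edge of H containing x. If a family of edges S is an induced matching in H \ S, then S is an induced matching in H. -/
variable {V : Type*} [DecidableEq V] [Fintype V]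

/-- in a `d`-uniform simple hypergraph in which any two distinct
meeting edges intersect in exactly `d - 1` vertices, if `x` is a simplicial
vertex and `S` an edge containing `x`, then every induced matching in `H \ S`
is an induced matching in `H`. -/
theorem inducedMatching_of_eraseEdge
    (E : Finset (Finset V)) (d : ℕ) (hd : 2 ≤ d)
    (hH : IsSimpleHypergraph E) (hUnif : ∀ S ∈ E, S.card = d)
    (hInt : ∀ S ∈ E, ∀ T ∈ E, S ≠ T → (S ∩ T).Nonempty → (S ∩ T).card = d - 1)
    (x : V) (hx : IsSimplicialVertex E d x)
    (S : Finset V) (hS : S ∈ E) (hxS : x ∈ S)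
    (M : Finset (Finset V)) (hM : IsInducedMatching (E.erase S) M) :
    IsInducedMatching E M := by
  obtain ⟨⟨hME, hsemi⟩, hdisj⟩ := hM
  have hMsub : M ⊆ E := hME.trans (Finset.erase_subset _ _)
  refine ⟨⟨hMsub, ?_⟩, hdisj⟩
  intro S' hS' hS'M hsub
  by_cases hSS : S' = S
  · subst hSS
    -- x ∈ S' ⊆ unionEdges M, so x belongs to some T ∈ M
    have hxU : x ∈ unionEdges M := hsub hxS
    obtain ⟨T, hTM, hxT⟩ := Finset.mem_biUnion.mp hxU
    have hTE : T ∈ E := hMsub hTM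
    have hTneS : T ≠ S' := by
      intro h; exact (Finset.mem_erase.mp (hME hTM)).1 h
    have hint : (S' ∩ T).card = d - 1 :=
      hInt S' hS' T hTE (fun h => hTneS h.symm) ⟨x, Finset.mem_inter.mpr ⟨hxS, hxT⟩⟩
    have hcardU : (S' ∪ T).card = d + 1 := by
      have := Finset.card_union_add_card_inter S' T
      rw [hUnif S' hS', hUnif T hTE, hint] at this
      omega
    set U := (S' ∪ T).erase x with hU
    have hUcard : U.card = d := by
      rw [hU, Finset.card_erase_of_mem (Finset.mem_union_left _ hxS), hcardU]; omega
    have hUnb : U ⊆ closedNbhd E x := by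
      intro v hv
      have hv' := Finset.mem_of_mem_erase hv
      rcases Finset.mem_union.mp hv' with h | h
      · exact Finset.mem_insert.mpr (Or.inr (Finset.mem_biUnion.mpr
          ⟨S', Finset.mem_filter.mpr ⟨hS', hxS⟩, h⟩))
      · exact Finset.mem_insert.mpr (Or.inr (Finset.mem_biUnion.mpr
          ⟨T, Finset.mem_filter.mpr ⟨hTE, hxT⟩, h⟩))
    have hUE : U ∈ E := hx U hUnb hUcard
    have hUneS : U ≠ S' := by
      intro h; rw [← h] at hxS; exact (Finset.mem_erase.mp hxS).1 rfl
    have hUerase : U ∈ E.erase S' := Finset.mem_erase.mpr ⟨hUneS, hUE⟩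
    -- U is not in M
    have hUnM : U ∉ M := by
      intro hUM
      have hUneT : U ≠ T := by
        intro h; rw [← h] at hxT; exact (Finset.mem_erase.mp hxT).1 rfl
      have hdis := hdisj U hUM T hTM hUneT
      obtain ⟨y, hyT, hyx⟩ : ∃ y ∈ T, y ≠ x := by
        have : 2 ≤ T.card := by rw [hUnif T hTE]; exact hd
        obtain ⟨y, hy, z, hz, hyz⟩ := Finset.one_lt_card.mp this
        by_cases h : y = x
        · exact ⟨z, hz, by rintro rfl; exact hyz h⟩
        · exact ⟨y, hy, h⟩
      have hyU : y ∈ U := Finset.mem_erase.mpr ⟨hyx, Finset.mem_union_right _ hyT⟩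
      exact (Finset.disjoint_left.mp hdis hyU) hyT
    -- but U ⊆ unionEdges M
    have hUsub : U ⊆ unionEdges M := by
      intro v hv
      rcases Finset.mem_union.mp (Finset.mem_of_mem_erase hv) with h | h
      · exact hsub h
      · exact Finset.mem_biUnion.mpr ⟨T, hTM, h⟩
    exact hsemi U hUerase hUnM hUsub
  · exact hsemi S' (Finset.mem_erase.mpr ⟨hSS, hS'⟩) hS'M hsub
end

section
/- Let d ≥ 2 and let H be a d-uniform simple hypergraph such that any two distinct edges with nonempty intersection meet in exactly d − 1 vertices. Let x be a simplicial vertex of H and S an edge of H containing x. If a family of edges S is a self disjoint set in H \ S, then S is a self disjoint set in H. -/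
variable {V : Type*} [DecidableEq V] [Fintype V]

/-- in a `d`-uniform simple hypergraph in which any two distinct
meeting edges intersect in exactly `d - 1` vertices, if `x` is a simplicial
vertex and `S` an edge containing `x`, then every self disjoint set in `H \ S`
is a self disjoint set in `H`. -/
theorem selfDisjointSet_of_eraseEdge
    (E : Finset (Finset V)) (d : ℕ) (hd : 2 ≤ d)
    (hH : IsSimpleHypergraph E) (hUnif : ∀ S ∈ E, S.card = d)
    (hInt : ∀ S ∈ E, ∀ T ∈ E, S ≠ T → (S ∩ T).Nonempty → (S ∩ T).card = d - 1)
    (x : V) (hx : IsSimplicialVertex E d x)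
    (S : Finset V) (hS : S ∈ E) (hxS : x ∈ S)
    (M : Finset (Finset V)) (hM : IsSelfDisjointSet (E.erase S) M) :
    IsSelfDisjointSet E M := by
  obtain ⟨hMsub, hself, M₀, hM₀M, ⟨⟨hM₀E', hSI⟩, hdisj⟩, hnear⟩ := hM
  have hM₀E : M₀ ⊆ E := hM₀E'.trans (Finset.erase_subset _ _)
  have hmemU : ∀ v, v ∈ unionEdges M₀ ↔ ∃ T ∈ M₀, v ∈ T := by
    intro v
    simp [unionEdges]
  -- Key claim: S is not contained in the union of M₀.
  have key : ¬ S ⊆ unionEdges M₀ := by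
    intro hSsub
    obtain ⟨T, hTM₀, hxT⟩ := (hmemU x).1 (hSsub hxS)
    have hTE : T ∈ E := hM₀E hTM₀
    have hTS : T ≠ S := (Finset.mem_erase.1 (hM₀E' hTM₀)).1
    have hST : S ≠ T := fun h => hTS h.symm
    have hcardST : (S ∩ T).card = d - 1 :=
      hInt S hS T hTE hST ⟨x, Finset.mem_inter.2 ⟨hxS, hxT⟩⟩
    have hScard : S.card = d := hUnif S hS
    have hcard_sdiff : (S \ T).card = 1 := by
      have := Finset.card_inter_add_card_sdiff S T
      omega
    obtain ⟨y, hy⟩ := Finset.card_eq_one.1 hcard_sdiff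
    have hyS : y ∈ S := by
      have : y ∈ S \ T := hy ▸ Finset.mem_singleton_self y
      exact (Finset.mem_sdiff.1 this).1
    have hyT : y ∉ T := by
      have : y ∈ S \ T := hy ▸ Finset.mem_singleton_self y
      exact (Finset.mem_sdiff.1 this).2
    obtain ⟨T', hT'M₀, hyT'⟩ := (hmemU y).1 (hSsub hyS)
    have hTT' : T ≠ T' := fun h => hyT (h ▸ hyT')
    have hdTT' : Disjoint T T' := hdisj T hTM₀ T' hT'M₀ hTT'
    have hT'E : T' ∈ E := hM₀E hT'M₀
    have hST' : S ≠ T' := fun h => (Finset.mem_erase.1 (hM₀E' hT'M₀)).1 h.symm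
    have hcardST' : (S ∩ T').card = d - 1 :=
      hInt S hS T' hT'E hST' ⟨y, Finset.mem_inter.2 ⟨hyS, hyT'⟩⟩
    have hsub1 : S ∩ T' ⊆ {y} := by
      intro z hz
      obtain ⟨hzS, hzT'⟩ := Finset.mem_inter.1 hz
      have hzT : z ∉ T := fun hzT => (Finset.disjoint_left.1 hdTT') hzT hzT'
      have : z ∈ S \ T := Finset.mem_sdiff.2 ⟨hzS, hzT⟩
      rw [hy] at this
      exact this
    have hle1 : d - 1 ≤ 1 := by
      calc d - 1 = (S ∩ T').card := hcardST'.symm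
        _ ≤ ({y} : Finset V).card := Finset.card_le_card hsub1
        _ = 1 := Finset.card_singleton y
    have hd2 : d = 2 := by omega
    -- Now d = 2, the graph case.
    have hSxy : S ∩ T = {x} := by
      apply Finset.eq_singleton_iff_unique_mem.2
      refine ⟨Finset.mem_inter.2 ⟨hxS, hxT⟩, ?_⟩
      intro z hz
      have h1 : (S ∩ T).card = 1 := by omega
      obtain ⟨w, hw⟩ := Finset.card_eq_one.1 h1
      rw [hw] at hz
      have hx' : x ∈ ({w} : Finset V) := hw ▸ Finset.mem_inter.2 ⟨hxS, hxT⟩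
      simp only [Finset.mem_singleton] at hz hx'
      rw [hz, ← hx']
    have hSeq : S = {x, y} := by
      have : S = (S ∩ T) ∪ (S \ T) := by
        ext v; simp only [Finset.mem_union, Finset.mem_inter, Finset.mem_sdiff]
        constructor
        · intro hv; by_cases h : v ∈ T
          · exact Or.inl ⟨hv, h⟩
          · exact Or.inr ⟨hv, h⟩
        · rintro (⟨h, _⟩ | ⟨h, _⟩) <;> exact h
      rw [this, hSxy, hy]
      rfl
    have hxy : x ≠ y := by
      intro h
      have : S.card = 1 := by rw [hSeq, h]; simp
      omega
    -- pick z in T distinct from x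
    have hTcard : T.card = d := hUnif T hTE
    obtain ⟨z, hzT, hzx⟩ : ∃ z ∈ T, z ≠ x := by
      by_contra h
      push_neg at h
      have : T ⊆ {x} := fun v hv => Finset.mem_singleton.2 (h v hv)
      have := Finset.card_le_card this
      simp at this
      omega
    have hyz : y ≠ z := fun h => hyT (h ▸ hzT)
    -- closed neighborhood memberships
    have hyN : y ∈ closedNbhd E x := by
      unfold closedNbhd
      apply Finset.mem_insert_of_mem
      apply Finset.mem_biUnion.2
      exact ⟨S, Finset.mem_filter.2 ⟨hS, hxS⟩, hyS⟩
    have hzN : z ∈ closedNbhd E x := by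
      unfold closedNbhd
      apply Finset.mem_insert_of_mem
      apply Finset.mem_biUnion.2
      exact ⟨T, Finset.mem_filter.2 ⟨hTE, hxT⟩, hzT⟩
    have hAsub : ({y, z} : Finset V) ⊆ closedNbhd E x := by
      intro v hv
      rcases Finset.mem_insert.1 hv with h | h
      · exact h ▸ hyN
      · exact (Finset.mem_singleton.1 h) ▸ hzN
    have hAcard : ({y, z} : Finset V).card = d := by
      rw [Finset.card_insert_of_notMem (by simpa using hyz), Finset.card_singleton]
      omega
    have hAE : ({y, z} : Finset V) ∈ E := hx _ hAsub hAcard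
    have hAS : ({y, z} : Finset V) ≠ S := by
      intro h
      have hzS : z ∈ S := by
        rw [← h]; exact Finset.mem_insert_of_mem (Finset.mem_singleton_self z)
      have : z ∈ S ∩ T := Finset.mem_inter.2 ⟨hzS, hzT⟩
      rw [hSxy] at this
      exact hzx (Finset.mem_singleton.1 this)
    have hAE' : ({y, z} : Finset V) ∈ E.erase S := Finset.mem_erase.2 ⟨hAS, hAE⟩
    have hAU : ({y, z} : Finset V) ⊆ unionEdges M₀ := by
      intro v hv
      rcases Finset.mem_insert.1 hv with h | h
      · exact (hmemU v).2 ⟨T', hT'M₀, h ▸ hyT'⟩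
      · exact (hmemU v).2 ⟨T, hTM₀, (Finset.mem_singleton.1 h) ▸ hzT⟩
    by_cases hAM : ({y, z} : Finset V) ∈ M₀
    · have hAT : ({y, z} : Finset V) ≠ T := by
        intro h
        exact hyT (h ▸ Finset.mem_insert_self y {z})
      have := hdisj _ hAM T hTM₀ hAT
      exact (Finset.disjoint_left.1 this)
        (Finset.mem_insert_of_mem (Finset.mem_singleton_self z)) hzT
    · exact hSI _ hAE' hAM hAU
  refine ⟨hMsub.trans (Finset.erase_subset _ _), hself, M₀, hM₀M, ⟨⟨hM₀E, ?_⟩, hdisj⟩, hnear⟩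
  intro A hAE hAM hAsub
  by_cases hAS : A = S
  · exact key (hAS ▸ hAsub)
  · exact hSI A (Finset.mem_erase.2 ⟨hAS, hAE⟩) hAM hAsub
end

section
/- Let H be a d-uniform simple hypergraph and let S be a self disjoint set in H consisting of i edges whose union has j vertices, with a witnessing induced matching S_0 ⊆ S of size s (as in the definition of self disjoint set). Then j − i ≤ (d − 1)·s. -/
variable {V : Type*} [DecidableEq V] [Fintype V]

/-- if `M` is a self disjoint set of type `(i, j)` in a
`d`-uniform simple hypergraph, with witnessing induced matching `M₀ ⊆ M` of
size `s`, then `j - i ≤ (d - 1) * s`. -/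
theorem selfDisjointSet_union_card_bound
    (E : Finset (Finset V)) (d : ℕ)
    (hH : IsSimpleHypergraph E) (hUnif : ∀ S ∈ E, S.card = d)
    (M M₀ : Finset (Finset V)) (hME : M ⊆ E)
    (hself : ∀ S ∈ M, ¬ S ⊆ unionEdges (M.erase S))
    (hM₀M : M₀ ⊆ M) (hM₀ : IsInducedMatching E M₀)
    (hwit : ∀ S ∈ M, S ∉ M₀ → ∃ T ∈ M₀, (S \ T).card = 1)
    (i j s : ℕ) (hi : M.card = i) (hj : (unionEdges M).card = j)
    (hs : M₀.card = s) :
    j - i ≤ (d - 1) * s := by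
  rcases M.eq_empty_or_nonempty with hM | ⟨S₀, hS₀⟩
  · subst hM
    simp [unionEdges] at hj
    omega
  · -- d ≥ 2
    have hd : 2 ≤ d := by
      rw [← hUnif S₀ (hME hS₀)]
      exact hH.1 S₀ (hME hS₀)
    have hsub : unionEdges M ⊆
        unionEdges M₀ ∪ (M \ M₀).biUnion (fun S => S \ unionEdges M₀) := by
      intro v hv
      rw [unionEdges, Finset.mem_biUnion] at hv
      obtain ⟨S, hSM, hvS⟩ := hv
      by_cases hv0 : v ∈ unionEdges M₀
      · exact Finset.mem_union_left _ hv0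
      · refine Finset.mem_union_right _ ?_
        rw [Finset.mem_biUnion]
        refine ⟨S, ?_, Finset.mem_sdiff.2 ⟨hvS, hv0⟩⟩
        rw [Finset.mem_sdiff]
        refine ⟨hSM, fun hS0 => hv0 ?_⟩
        exact Finset.mem_biUnion.2 ⟨S, hS0, hvS⟩
    have h1 : (unionEdges M₀).card ≤ d * s := by
      calc (unionEdges M₀).card ≤ ∑ S ∈ M₀, (id S).card :=
            Finset.card_biUnion_le
        _ = ∑ S ∈ M₀, d := by
            refine Finset.sum_congr rfl fun S hS => hUnif S (hME (hM₀M hS))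
        _ = d * s := by rw [Finset.sum_const, hs, smul_eq_mul, mul_comm]
    have h2 : ((M \ M₀).biUnion (fun S => S \ unionEdges M₀)).card ≤ i - s := by
      calc ((M \ M₀).biUnion (fun S => S \ unionEdges M₀)).card
          ≤ ∑ S ∈ M \ M₀, (S \ unionEdges M₀).card := Finset.card_biUnion_le
        _ ≤ ∑ S ∈ M \ M₀, 1 := by
            refine Finset.sum_le_sum fun S hS => ?_
            rw [Finset.mem_sdiff] at hS
            obtain ⟨T, hT, hcard⟩ := hwit S hS.1 hS.2
            have hTsub : T ⊆ unionEdges M₀ := fun v hv =>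
              Finset.mem_biUnion.2 ⟨T, hT, hv⟩
            have : S \ unionEdges M₀ ⊆ S \ T :=
              Finset.sdiff_subset_sdiff (le_refl _) hTsub
            calc (S \ unionEdges M₀).card ≤ (S \ T).card :=
                  Finset.card_le_card this
              _ = 1 := hcard
        _ = i - s := by
            rw [Finset.sum_const, smul_eq_mul, mul_one,
              Finset.card_sdiff_of_subset hM₀M, hi, hs]
    have hsM : s ≤ i := by rw [← hi, ← hs]; exact Finset.card_le_card hM₀M
    have : j ≤ d * s + (i - s) := by
      rw [← hj]
      calc (unionEdges M).card ≤ (unionEdges M₀ ∪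
            (M \ M₀).biUnion (fun S => S \ unionEdges M₀)).card :=
            Finset.card_le_card hsub
        _ ≤ _ := le_trans (Finset.card_union_le _ _) (Nat.add_le_add h1 h2)
    have hds : d * s = (d - 1) * s + s := by
      cases d with
      | zero => omega
      | succ n => simp [Nat.succ_sub_one, Nat.succ_mul]
    omega
end
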